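/- Let $1 < p \le 2$ and $\mu \ge 0$. There exists a constant $C > 0$, independent of $\mu$, such that for all matrices $A, B \in \mathbb{R}^{N \times n}$, $\left| (\mu + |A|)^{p-2} A - (\mu + |B|)^{p-2} B \right| \le C \, \frac{|A - B|}{(\mu + |A| + |B|)^{2-p}}$, where $|\cdot|$ denotes the Frobenius (Euclidean) norm and the left side is interpreted as $0$ when $\mu = 0$ and the corresponding matrix vanishes. -/

import Mathlib

private lemma key_est (N n : ℕ) (p : ℝ) (hp1 : 1 < p) (hp2 : p ≤ 2) (μ : ℝ) (hμ : 0 ≤ μ)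
    (A B : EuclideanSpace ℝ (Fin N × Fin n)) (hBA : ‖B‖ ≤ ‖A‖) :
    ‖(μ + ‖A‖) ^ (p - 2) • A - (μ + ‖B‖) ^ (p - 2) • B‖ ≤
      4 * ‖A - B‖ / (μ + ‖A‖ + ‖B‖) ^ (2 - p) := by
  set t : ℝ := 2 - p with ht
  have ht0 : 0 ≤ t := by simp [ht]; linarith
  have ht1 : t ≤ 1 := by simp [ht]; linarith
  have hpt : p - 2 = -t := by simp [ht]
  set a : ℝ := μ + ‖A‖ with ha
  set b : ℝ := μ + ‖B‖ with hb
  have ha0 : 0 ≤ a := by positivity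
  have hb0 : 0 ≤ b := by positivity
  have hba : b ≤ a := by simp [ha, hb]; linarith
  rcases eq_or_lt_of_le ha0 with h0 | hapos
  · -- degenerate: μ = 0, A = 0, B = 0
    have hA : ‖A‖ = 0 := by have := norm_nonneg A; simp [ha] at h0; linarith
    have hB : ‖B‖ = 0 := le_antisymm (hA ▸ hBA) (norm_nonneg B)
    have hA' : A = 0 := norm_eq_zero.mp hA
    have hB' : B = 0 := norm_eq_zero.mp hB
    rw [hA', hB']; simp
  · set s : ℝ := μ + ‖A‖ + ‖B‖ with hs
    have hs2a : s ≤ 2 * a := by simp [hs, ha]; linarith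
    have hspos : 0 < s := by have := norm_nonneg B; simp [hs]; positivity
    have hst : 0 < s ^ t := Real.rpow_pos_of_pos hspos t
    have hat : 0 < a ^ t := Real.rpow_pos_of_pos hapos t
    -- s^t ≤ 2 * a^t
    have h1 : s ^ t ≤ 2 * a ^ t := by
      calc s ^ t ≤ (2 * a) ^ t := Real.rpow_le_rpow hspos.le hs2a ht0
        _ = 2 ^ t * a ^ t := Real.mul_rpow (by norm_num) ha0
        _ ≤ 2 * a ^ t := by
            have : (2:ℝ) ^ t ≤ 2 ^ (1:ℝ) :=
              Real.rpow_le_rpow_of_exponent_le (by norm_num) ht1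
            simp at this
            nlinarith
    -- a^(-t) ≤ 2 / s^t
    have h2 : a ^ (-t) ≤ 2 / s ^ t := by
      rw [Real.rpow_neg ha0, inv_le_iff_one_le_mul₀ hat, div_mul_eq_mul_div,
        le_div_iff₀ hst]
      nlinarith
    -- second-term bound
    have h3 : |a ^ (-t) - b ^ (-t)| * ‖B‖ ≤ ‖A - B‖ * a ^ (-t) := by
      rcases eq_or_lt_of_le (norm_nonneg B) with hB0 | hBpos
      · rw [← hB0, mul_zero]; positivity
      · have hbpos : 0 < b := by have : (0:ℝ) < ‖B‖ := hBpos; simp [hb]; positivity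
        have hmono : a ^ (-t) ≤ b ^ (-t) :=
          Real.rpow_le_rpow_of_nonpos hbpos hba (neg_nonpos.mpr ht0)
        rw [abs_of_nonpos (by linarith), neg_sub]
        have hBb : ‖B‖ ≤ b := by simp [hb]; linarith
        have step1 : (b ^ (-t) - a ^ (-t)) * ‖B‖ ≤ (b ^ (-t) - a ^ (-t)) * b :=
          mul_le_mul_of_nonneg_left hBb (by linarith)
        have hb1t : b ^ (1 - t) = b * b ^ (-t) := by
          rw [show (1:ℝ) - t = 1 + (-t) by ring, Real.rpow_add hbpos, Real.rpow_one]
        have ha1t : a ^ (1 - t) = a * a ^ (-t) := by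
          rw [show (1:ℝ) - t = 1 + (-t) by ring, Real.rpow_add hapos, Real.rpow_one]
        have hmono2 : b ^ (1 - t) ≤ a ^ (1 - t) :=
          Real.rpow_le_rpow hb0 hba (by linarith)
        have hAB : a - b ≤ ‖A - B‖ := by
          have := norm_sub_norm_le A B
          simp only [ha, hb]; linarith
        have hant : (0:ℝ) ≤ a ^ (-t) := (Real.rpow_pos_of_pos hapos _).le
        nlinarith [step1, hmono2, hAB, hant, hb1t, ha1t]
    have hant : (0:ℝ) ≤ a ^ (-t) := (Real.rpow_pos_of_pos hapos _).le
    rw [hpt]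
    have decomp : a ^ (-t) • A - b ^ (-t) • B
        = a ^ (-t) • (A - B) + (a ^ (-t) - b ^ (-t)) • B := by module
    rw [decomp]
    calc ‖a ^ (-t) • (A - B) + (a ^ (-t) - b ^ (-t)) • B‖
        ≤ ‖a ^ (-t) • (A - B)‖ + ‖(a ^ (-t) - b ^ (-t)) • B‖ := norm_add_le _ _
      _ = a ^ (-t) * ‖A - B‖ + |a ^ (-t) - b ^ (-t)| * ‖B‖ := by
          rw [norm_smul, norm_smul, Real.norm_eq_abs, Real.norm_eq_abs, abs_of_nonneg hant]
      _ ≤ (2 / s ^ t) * ‖A - B‖ + ‖A - B‖ * a ^ (-t) :=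
          add_le_add (mul_le_mul_of_nonneg_right h2 (norm_nonneg _)) h3
      _ ≤ (2 / s ^ t) * ‖A - B‖ + ‖A - B‖ * (2 / s ^ t) :=
          add_le_add_right (mul_le_mul_of_nonneg_left h2 (norm_nonneg _)) _
      _ = 4 * ‖A - B‖ / s ^ t := by field_simp; ring

/-- Continuity estimate for the p-Laplacian stress tensor
`S(A) = (μ + |A|)^(p-2) A` on `N × n` matrices (Frobenius norm), with a constant
independent of `μ ≥ 0`. -/
theorem stmt_10 (N n : ℕ) (p : ℝ) (hp1 : 1 < p) (hp2 : p ≤ 2) :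
    ∃ C : ℝ, 0 < C ∧ ∀ μ : ℝ, 0 ≤ μ → ∀ A B : EuclideanSpace ℝ (Fin N × Fin n),
      ‖(μ + ‖A‖) ^ (p - 2) • A - (μ + ‖B‖) ^ (p - 2) • B‖ ≤
        C * ‖A - B‖ / (μ + ‖A‖ + ‖B‖) ^ (2 - p) := by
  refine ⟨4, by norm_num, fun μ hμ A B => ?_⟩
  rcases le_total ‖B‖ ‖A‖ with h | h
  · exact key_est N n p hp1 hp2 μ hμ A B h
  · have := key_est N n p hp1 hp2 μ hμ B A h
    rw [norm_sub_rev, norm_sub_rev B A] at this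
    have e : μ + ‖B‖ + ‖A‖ = μ + ‖A‖ + ‖B‖ := by ring
    rw [e] at this
    exact this
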